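/- Let T be the 8×8 column-stochastic transition matrix of the 3-qubit repetition code Markov chain with syndrome-flip probability p ∈ (0,1) (as given in the paper). For m ≥ 1 let q_m denote the polarization obtained from initial distribution concentrated on |000⟩ minus |111⟩ and readout by majority vote after m steps. Then q_1 = 1 (no logical error after one round) but q_2 < 1. -/
import Mathlib


namespace Stmt17

/-- States of the classical Markov chain: the 8 computational basis states of
three bits. -/
abbrev St := Fin 3 → ZMod 2

/-- Syndromes: the parities measured by `ZZI` and `IZZ`. -/
abbrev Syn := ZMod 2 × ZMod 2

/-- The (perfect) syndrome of a state. -/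
def synOf (v : St) : Syn := (v 0 + v 1, v 1 + v 2)

/-- The bit flips effected by the corrections: `R(0,0)` flips nothing,
`R(1,0)` flips bit 1, `R(0,1)` flips bit 3, `R(1,1)` flips bit 2. -/
def corrFlip (s : Syn) (v : St) : St :=
  if s = (0, 0) then v
  else if s = (1, 0) then Function.update v 0 (v 0 + 1)
  else if s = (0, 1) then Function.update v 2 (v 2 + 1)
  else Function.update v 1 (v 1 + 1)

/-- Hamming distance between two 2-bit syndromes. -/
def ham (s s' : Syn) : ℕ :=
  (if s.1 = s'.1 then 0 else 1) + (if s.2 = s'.2 then 0 else 1)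

/-- Probability of reading syndrome `s'` when the true syndrome is `s`, with
independent ancilla flip probability `p`. -/
def chi (p : ℝ) (s s' : Syn) : ℝ := (1 - p)^(2 - ham s s') * p^(ham s s')

/-- The 8×8 column-stochastic transition matrix of one noisy QEC round:
from state `v` (true syndrome `synOf v`), the measured syndrome is `s'` with
probability `χ(synOf v, s')` and the corresponding correction is applied. -/
noncomputable def T (p : ℝ) : Matrix St St ℝ :=
  Matrix.of fun w v => ∑ s' : Syn, if w = corrFlip s' v then chi p (synOf v) s' else 0

/-- Majority-vote readout: `+1` if the majority of the three bits is `0`,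
`-1` otherwise. -/
def maj (v : St) : ℝ :=
  if (Finset.univ.filter fun i => v i = 1).card ≤ 1 then 1 else -1

/-- Polarization after `m` rounds: the expected majority-vote readout starting
from `|000⟩` minus that starting from `|111⟩`, divided by 2. -/
noncomputable def q (p : ℝ) (m : ℕ) : ℝ :=
  ((∑ v : St, maj v * (T p ^ m) v (fun _ => 0)) -
    (∑ v : St, maj v * (T p ^ m) v (fun _ => 1))) / 2

section Aux
open Finset

lemma sum_zmod2 (f : ZMod 2 → ℝ) : ∑ x : ZMod 2, f x = f 0 + f 1 := by
  have h : (Finset.univ : Finset (ZMod 2)) = {0, 1} := by decide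
  rw [h, Finset.sum_insert (by decide), Finset.sum_singleton]

lemma sum_syn (f : Syn → ℝ) :
    ∑ s : Syn, f s = f (0,0) + f (0,1) + f (1,0) + f (1,1) := by
  rw [Fintype.sum_prod_type, sum_zmod2 (fun a => ∑ b : ZMod 2, f (a, b)),
    sum_zmod2 (fun b => f (0, b)), sum_zmod2 (fun b => f (1, b))]
  ring

lemma sum_st (f : St → ℝ) :
    ∑ v : St, f v = f ![0,0,0] + f ![0,0,1] + f ![0,1,0] + f ![0,1,1]
      + f ![1,0,0] + f ![1,0,1] + f ![1,1,0] + f ![1,1,1] := by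
  have h : (Finset.univ : Finset St) =
      {![0,0,0], ![0,0,1], ![0,1,0], ![0,1,1], ![1,0,0], ![1,0,1], ![1,1,0], ![1,1,1]} := by
    decide
  rw [h, Finset.sum_insert (by decide), Finset.sum_insert (by decide),
    Finset.sum_insert (by decide), Finset.sum_insert (by decide),
    Finset.sum_insert (by decide), Finset.sum_insert (by decide),
    Finset.sum_insert (by decide), Finset.sum_singleton]
  ring

lemma T_apply (p : ℝ) (w v : St) :
    T p w v = (if w = corrFlip (0,0) v then chi p (synOf v) (0,0) else 0)
      + (if w = corrFlip (0,1) v then chi p (synOf v) (0,1) else 0)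
      + (if w = corrFlip (1,0) v then chi p (synOf v) (1,0) else 0)
      + (if w = corrFlip (1,1) v then chi p (synOf v) (1,1) else 0) := by
  simp only [T, Matrix.of_apply]
  rw [sum_syn]

end Aux

/-- For the 3-qubit repetition code Markov chain with syndrome-flip
probability `p ∈ (0,1)`, no logical error occurs after one round
(`q 1 = 1`) but after two rounds the polarization has strictly decayed
(`q 2 < 1`). -/
theorem stmt17 (p : ℝ) (hp : 0 < p) (hp1 : p < 1) :
    q p 1 = 1 ∧ q p 2 < 1 := by
  have h0 : (fun _ : Fin 3 => (0 : ZMod 2)) = ![0,0,0] := by decide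
  have h1 : (fun _ : Fin 3 => (1 : ZMod 2)) = ![1,1,1] := by decide
  constructor
  · unfold q
    rw [pow_one, h0, h1, sum_st, sum_st]
    simp only [T_apply]
    norm_num (config := { decide := true }) [corrFlip, chi, ham, synOf, maj]
    ring
  · unfold q
    rw [pow_two, h0, h1, sum_st, sum_st]
    simp only [Matrix.mul_apply]
    simp only [sum_st (fun u => T p _ u * T p u _)]
    simp only [T_apply]
    norm_num (config := { decide := true }) [corrFlip, chi, ham, synOf, maj]
    nlinarith [mul_pos hp hp, mul_pos (mul_pos hp hp) (mul_pos hp hp),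
      sq_nonneg p, sq_nonneg (1-p),
      mul_pos (mul_pos hp hp) (mul_pos (sub_pos.mpr hp1) (sub_pos.mpr hp1))]

end Stmt17
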